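/- arXiv:2305.13404 — 6 statements merged into one kernel-verified Lean document; each statement's English description precedes it below -/
import Mathlib

section
/- Let L : ℝⁿ → ℝ be strictly convex and twice continuously differentiable, and let G be a group acting on ℝⁿ such that L(g · w) = L(w) for all g ∈ G and w ∈ ℝⁿ, and such that the action is transitive on level sets of L: for any w_a, w_b ∈ ℝⁿ with L(w_a) = L(w_b) there exists g ∈ G with w_a = g · w_b. Assume furthermore that for every value c in the range of L the supremum of ‖∇L(w)‖² over the level set {w : L(w) = c} is attained. If two points w₁, w₂ ∈ ℝⁿ satisfy max_{g∈G} ‖∇L(g · w₁)‖² = ‖∇L(w₂)‖², then L(w₁) ≤ L(w₂). -/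
set_option maxHeartbeats 1000000


/-- for a strictly convex C² loss with a symmetry group acting transitively on
level sets (and the sup of the squared gradient norm attained on each level set), if the
maximal squared gradient norm over the orbit of `w₁` equals `‖∇L(w₂)‖²`, then `L w₁ ≤ L w₂`. -/
theorem stmt4 {n : ℕ} (L : EuclideanSpace ℝ (Fin n) → ℝ)
    (hsc : StrictConvexOn ℝ Set.univ L) (hC2 : ContDiff ℝ 2 L)
    (G : Type*) [Group G] [MulAction G (EuclideanSpace ℝ (Fin n))]
    (hinv : ∀ (g : G) w, L (g • w) = L w)
    (htrans : ∀ wa wb, L wa = L wb → ∃ g : G, wa = g • wb)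
    (hattain : ∀ c ∈ Set.range L,
      ∃ w, L w = c ∧ ∀ v, L v = c → ‖gradient L v‖ ^ 2 ≤ ‖gradient L w‖ ^ 2)
    (w₁ w₂ : EuclideanSpace ℝ (Fin n))
    (hmax : (⨆ g : G, ‖gradient L (g • w₁)‖ ^ 2) = ‖gradient L w₂‖ ^ 2) :
    L w₁ ≤ L w₂ := by
  by_contra hcon
  push_neg at hcon
  -- hcon : L w₂ < L w₁
  haveI : Nonempty G := ⟨1⟩
  have hdiff : Differentiable ℝ L := hC2.differentiable two_ne_zero
  -- derivative of L along a line
  have hgd : ∀ (x dd : EuclideanSpace ℝ (Fin n)) (t : ℝ),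
      HasDerivAt (fun s : ℝ => L (x + s • dd))
        (inner ℝ (gradient L (x + t • dd)) dd : ℝ) t := by
    intro x dd t
    have hcurve : HasDerivAt (fun s : ℝ => x + s • dd) dd t := by
      simpa using ((hasDerivAt_id t).smul_const dd).const_add x
    have hL : HasFDerivAt L
        (InnerProductSpace.toDual ℝ _ (gradient L (x + t • dd))) (x + t • dd) :=
      (hdiff _).hasGradientAt.hasFDerivAt
    have h := hL.comp_hasDerivAt t hcurve
    simp only [InnerProductSpace.toDual_apply_apply] at h
    exact h
  -- strict convexity of L along a nontrivial line
  have hstrict : ∀ (x dd : EuclideanSpace ℝ (Fin n)), dd ≠ 0 →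
      StrictConvexOn ℝ Set.univ (fun t : ℝ => L (x + t • dd)) := by
    intro x dd hddne
    refine ⟨convex_univ, fun t _ s _ hts a b ha hb hab => ?_⟩
    have hne : x + t • dd ≠ x + s • dd := by
      simp only [ne_eq, add_right_inj]
      intro h
      exact hts (smul_left_injective ℝ hddne h)
    have h := hsc.2 (Set.mem_univ (x + t • dd)) (Set.mem_univ (x + s • dd)) hne ha hb hab
    have hcomb : a • (x + t • dd) + b • (x + s • dd) = x + (a • t + b • s) • dd := by
      simp only [smul_add, smul_smul, smul_eq_mul, add_smul]
      rw [show a • x + (a * t) • dd + (b • x + (b * s) • dd)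
          = (a • x + b • x) + ((a * t) • dd + (b * s) • dd) by abel, ← add_smul, hab, one_smul]
    rw [hcomb] at h
    simpa using h
  obtain ⟨w', hw'L, hw'max⟩ := hattain (L w₁) ⟨w₁, rfl⟩
  have hbdd : ∀ g : G, ‖gradient L (g • w₁)‖ ^ 2 ≤ ‖gradient L w'‖ ^ 2 :=
    fun g => hw'max _ (hinv g w₁)
  have hsup : (⨆ g : G, ‖gradient L (g • w₁)‖ ^ 2) = ‖gradient L w'‖ ^ 2 := by
    refine le_antisymm (ciSup_le hbdd) ?_
    obtain ⟨g, hg⟩ := htrans w' w₁ hw'L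
    calc ‖gradient L w'‖ ^ 2 = ‖gradient L (g • w₁)‖ ^ 2 := by rw [← hg]
      _ ≤ _ := le_ciSup ⟨‖gradient L w'‖ ^ 2, by rintro _ ⟨g', rfl⟩; exact hbdd g'⟩ g
  have hkey : ‖gradient L w₂‖ ^ 2 = ‖gradient L w'‖ ^ 2 := by rw [← hmax, hsup]
  by_cases hd : gradient L w₂ = 0
  · -- then ∇L w' = 0, contradicting L w' = L w₁ > L w₂
    have hw'0 : gradient L w' = 0 := by
      have h0 : ‖gradient L w'‖ ^ 2 = 0 := by rw [← hkey, hd]; simp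
      simpa using h0
    have hne : w₂ - w' ≠ 0 := by
      refine sub_ne_zero.2 fun h => ?_
      rw [h, hw'L] at hcon
      exact lt_irrefl _ hcon
    have hgc := (hstrict w' (w₂ - w') hne).convexOn
    have hs := hgc.deriv_le_slope (Set.mem_univ (0:ℝ)) (Set.mem_univ 1) one_pos
      (hgd w' (w₂ - w') 0).differentiableAt
    rw [(hgd w' (w₂ - w') 0).deriv] at hs
    simp only [zero_smul, add_zero, hw'0, inner_zero_left, slope_def_field, one_smul,
      add_sub_cancel] at hs
    rw [hw'L] at hs
    have : (0:ℝ) ≤ L w₂ - L w₁ := by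
      simpa using hs
    linarith
  · set d := gradient L w₂ with hdd
    have hdne : d ≠ 0 := hd
    have hdsq : (0:ℝ) < ‖d‖ ^ 2 := pow_pos (norm_pos_iff.mpr hdne) 2
    set T := (L w₁ - L w₂) / ‖d‖ ^ 2 with hT
    have hT0 : (0:ℝ) < T := div_pos (sub_pos.2 hcon) hdsq
    have hg := hstrict w₂ d hd
    have hgc : ConvexOn ℝ Set.univ (fun t : ℝ => L (w₂ + t • d)) := hg.convexOn
    have hderiv0 : deriv (fun t : ℝ => L (w₂ + t • d)) 0 = ‖d‖ ^ 2 := by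
      have h := (hgd w₂ d 0).deriv
      rw [zero_smul, add_zero] at h
      rw [h]
      exact real_inner_self_eq_norm_sq d
    -- the line reaches level L w₁
    have hgT : L w₁ ≤ L (w₂ + T • d) := by
      have hs := hgc.deriv_le_slope (Set.mem_univ (0:ℝ)) (Set.mem_univ T) hT0
        (hgd w₂ d 0).differentiableAt
      rw [hderiv0, slope_def_field] at hs
      simp only [zero_smul, add_zero, sub_zero] at hs
      have h2 : ‖d‖ ^ 2 * T ≤ L (w₂ + T • d) - L w₂ := (le_div_iff₀ hT0).mp hs
      have h3 : ‖d‖ ^ 2 * T = L w₁ - L w₂ := by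
        rw [hT, mul_div_cancel₀ _ (ne_of_gt hdsq)]
      linarith
    have hcont : ContinuousOn (fun t : ℝ => L (w₂ + t • d)) (Set.Icc 0 T) :=
      (hC2.continuous.comp (by continuity)).continuousOn
    obtain ⟨t₀, ht₀mem, ht₀⟩ := intermediate_value_Icc hT0.le hcont
      (by constructor
          · simpa using hcon.le
          · simpa using hgT)
    -- ht₀ : L (w₂ + t₀ • d) = L w₁
    have ht₀pos : (0:ℝ) < t₀ := by
      rcases lt_or_eq_of_le ht₀mem.1 with h | h
      · exact h
      · exfalso
        rw [← h] at ht₀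
        simp only [zero_smul, add_zero] at ht₀
        rw [ht₀] at hcon
        exact lt_irrefl _ hcon
    have hmono := hg.strictMonoOn_deriv (fun x _ => (hgd w₂ d x).differentiableAt)
    have hlt2 := hmono (Set.mem_univ (0:ℝ)) (Set.mem_univ t₀) ht₀pos
    rw [hderiv0, (hgd w₂ d t₀).deriv] at hlt2
    have hCS := real_inner_le_norm (gradient L (w₂ + t₀ • d)) d
    have hbound : ‖gradient L (w₂ + t₀ • d)‖ ^ 2 ≤ ‖d‖ ^ 2 := by
      rw [hdd, hkey]
      exact hw'max _ ht₀
    have h1 : ‖gradient L (w₂ + t₀ • d)‖ ≤ ‖d‖ := by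
      nlinarith [norm_nonneg (gradient L (w₂ + t₀ • d)), norm_nonneg d]
    nlinarith [norm_nonneg d]
end

section
/- Let A ∈ ℝ^{n×n} be a symmetric positive definite matrix, let w ∈ ℝⁿ, and let α, β ∈ ℤ. Then (wᵀ A^α w)² ≤ (wᵀ A^{α+β} w) · (wᵀ A^{α−β} w), where integer powers A^γ for negative γ are defined via the inverse of A. -/
open Matrix

lemma psd_cauchy_schwarz {n : ℕ} (M : Matrix (Fin n) (Fin n) ℝ) (hM : M.PosSemidef)
    (x y : Fin n → ℝ) :
    (x ⬝ᵥ M.mulVec y) ^ 2 ≤ (x ⬝ᵥ M.mulVec x) * (y ⬝ᵥ M.mulVec y) := by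
  have hsymm : ∀ u v : Fin n → ℝ, u ⬝ᵥ M.mulVec v = v ⬝ᵥ M.mulVec u := by
    intro u v
    rw [dotProduct_mulVec, dotProduct_comm, ← mulVec_transpose]
    have : Mᵀ = M := by
      have := hM.isHermitian
      simpa [Matrix.IsHermitian, conjTranspose_eq_transpose_of_trivial] using this
    rw [this]
  have key : ∀ t : ℝ, 0 ≤ (y ⬝ᵥ M.mulVec y) * (t * t) +
      (2 * (x ⬝ᵥ M.mulVec y)) * t + (x ⬝ᵥ M.mulVec x) := by
    intro t
    have h0 : 0 ≤ (x + t • y) ⬝ᵥ M.mulVec (x + t • y) := by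
      have := hM.dotProduct_mulVec_nonneg (x + t • y)
      simpa using this
    have hexp : (x + t • y) ⬝ᵥ M.mulVec (x + t • y) =
        (y ⬝ᵥ M.mulVec y) * (t * t) + (2 * (x ⬝ᵥ M.mulVec y)) * t + (x ⬝ᵥ M.mulVec x) := by
      rw [mulVec_add, dotProduct_add, add_dotProduct, add_dotProduct,
        mulVec_smul, dotProduct_smul, smul_dotProduct, smul_dotProduct,
        dotProduct_smul, hsymm y x]
      simp [smul_eq_mul]; ring
    linarith [hexp ▸ h0]
  have hd := discrim_le_zero key
  rw [discrim] at hd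
  nlinarith [hd]

/-- for a symmetric positive definite matrix `A`, any vector `w` and any
integers `α, β`, one has `(wᵀ A^α w)² ≤ (wᵀ A^{α+β} w) (wᵀ A^{α-β} w)`. -/
theorem stmt5 {n : ℕ} (A : Matrix (Fin n) (Fin n) ℝ) (hA : A.PosDef) (hsymm : A.IsSymm)
    (w : Fin n → ℝ) (α β : ℤ) :
    (w ⬝ᵥ (A ^ α).mulVec w) ^ 2 ≤
      (w ⬝ᵥ (A ^ (α + β)).mulVec w) * (w ⬝ᵥ (A ^ (α - β)).mulVec w) := by
  have hdet : IsUnit A.det := isUnit_iff_ne_zero.mpr hA.det_pos.ne'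
  have hpsd : (A ^ (α - β)).PosSemidef := hA.posSemidef.zpow (α - β)
  have hβsymm : (A ^ (β : ℤ))ᵀ = A ^ (β : ℤ) := by
    have := hA.isHermitian.zpow β
    simpa [Matrix.IsHermitian, conjTranspose_eq_transpose_of_trivial] using this
  have h1 : w ⬝ᵥ (A ^ (α - β)).mulVec ((A ^ (β : ℤ)).mulVec w) = w ⬝ᵥ (A ^ α).mulVec w := by
    rw [mulVec_mulVec, ← Matrix.zpow_add hdet]
    norm_num
  have key : ∀ (N X : Matrix (Fin n) (Fin n) ℝ) (u v : Fin n → ℝ),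
      (N *ᵥ u) ⬝ᵥ (X *ᵥ v) = u ⬝ᵥ ((Nᵀ * X) *ᵥ v) := by
    intro N X u v
    rw [← vecMul_transpose, ← dotProduct_mulVec, mulVec_mulVec]
  have h2 : ((A ^ (β : ℤ)).mulVec w) ⬝ᵥ (A ^ (α - β)).mulVec ((A ^ (β : ℤ)).mulVec w) =
      w ⬝ᵥ (A ^ (α + β)).mulVec w := by
    rw [key, hβsymm, mulVec_mulVec, mul_assoc, ← Matrix.zpow_add hdet, ← Matrix.zpow_add hdet]
    congr 2
    ring
  have := psd_cauchy_schwarz (A ^ (α - β)) hpsd w ((A ^ (β : ℤ)).mulVec w)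
  rw [h1, h2] at this
  linarith [this]
end

section
/- Let L : ℝⁿ → ℝ be a convex, twice continuously differentiable function, and let w ∈ ℝⁿ be a point at which the Hessian H = ∇²L(w) is invertible and the gradient g = ∇L(w) is nonzero. Define the gradient-descent direction v₁ = −g, the Newton direction v₂ = −H⁻¹ g, the projection v_∥ = ((v₂ · v₁)/‖v₁‖²) v₁, and the orthogonal component v_⊥ = v₂ − v_∥. Then the directional derivative of the function u ↦ ‖∇L(u)‖² at w along v_⊥, which equals v_⊥ · (2 H g), is nonnegative: v_⊥ · (2 ∇²L(w) ∇L(w)) ≥ 0. -/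
open scoped RealInnerProductSpace
open InnerProductSpace Filter

section aux
variable {n : ℕ}
local notation "E" => EuclideanSpace ℝ (Fin n)

noncomputable def toDualCLM (n : ℕ) : E →L[ℝ] (E →L[ℝ] ℝ) :=
  (InnerProductSpace.toDual ℝ E).toContinuousLinearEquiv.toContinuousLinearMap

lemma toDualCLM_apply (x y : E) : toDualCLM n x y = ⟪x, y⟫ := rfl

lemma hessian_symm (L : E → ℝ) (hC2 : ContDiff ℝ 2 L) (w : E)
    (H : E →L[ℝ] E) (hH : HasFDerivAt (gradient L) H w) :
    ∀ u v : E, ⟪H u, v⟫ = ⟪H v, u⟫ := by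
  have hdiff : Differentiable ℝ L := hC2.differentiable (by norm_num)
  have hf : ∀ y : E, HasFDerivAt L (toDualCLM n (gradient L y)) y := by
    intro y
    have h1 : toDualCLM n (gradient L y) = fderiv ℝ L y := by
      simp [toDualCLM, gradient]
    rw [h1]
    exact (hdiff y).hasFDerivAt
  have hx : HasFDerivAt (fun y => toDualCLM n (gradient L y))
      ((toDualCLM n).comp H) w := (toDualCLM n).hasFDerivAt.comp w hH
  intro u v
  have := second_derivative_symmetric hf hx u v
  simpa [toDualCLM_apply] using this

lemma hessian_psd (L : E → ℝ) (hconv : ConvexOn ℝ Set.univ L) (hC2 : ContDiff ℝ 2 L) (w : E)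
    (H : E →L[ℝ] E) (hH : HasFDerivAt (gradient L) H w) :
    ∀ x : E, 0 ≤ ⟪H x, x⟫ := by
  intro x
  have hdiff : Differentiable ℝ L := hC2.differentiable (by norm_num)
  set φ : ℝ → ℝ := fun t => L (w + t • x) with hφ
  set ψ : ℝ → ℝ := fun t => ⟪gradient L (w + t • x), x⟫ with hψdef
  have hline : ∀ t : ℝ, HasDerivAt (fun s : ℝ => w + s • x) x t := by
    intro t
    simpa using ((hasDerivAt_id t).smul_const x).const_add w
  have hφd : ∀ t : ℝ, HasDerivAt φ (ψ t) t := by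
    intro t
    have h1 : HasFDerivAt L (toDual ℝ _ (gradient L (w + t • x))) (w + t • x) := by
      have : toDual ℝ _ (gradient L (w + t • x)) = fderiv ℝ L (w + t • x) := by
        simp [gradient]
      rw [this]; exact (hdiff _).hasFDerivAt
    exact h1.comp_hasDerivAt t (hline t)
  have hφconv : ConvexOn ℝ Set.univ φ := by
    refine ⟨convex_univ, ?_⟩
    intro s _ t _ a b ha hb hab
    have key := hconv.2 (Set.mem_univ (w + s • x)) (Set.mem_univ (w + t • x)) ha hb hab
    have heq : a • (w + s • x) + b • (w + t • x) = w + (a • s + b • t) • x := by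
      have h1 : a • (w + s • x) + b • (w + t • x)
          = (a + b) • w + (a • s + b • t) • x := by
        rw [show a • s + b • t = a * s + b * t from rfl]
        module
      rw [h1, hab, one_smul]
    rw [heq] at key
    exact key
  have hmono : Monotone ψ := by
    have h1 : MonotoneOn (deriv φ) (interior Set.univ) :=
      hφconv.monotoneOn_deriv (fun t _ => (hφd t).differentiableAt) |>.mono
        (by simp)
    have h2 : ∀ t, deriv φ t = ψ t := fun t => (hφd t).deriv
    intro s t hst
    rw [← h2, ← h2]
    exact h1 (by simp) (by simp) hst
  have hψd : HasDerivAt ψ ⟪H x, x⟫ 0 := by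
    have hg0 : HasDerivAt (fun t : ℝ => gradient L (w + t • x)) (H x) 0 := by
      have hH' : HasFDerivAt (gradient L) H (w + (0:ℝ) • x) := by simpa using hH
      exact hH'.comp_hasDerivAt 0 (hline 0)
    exact ((innerSL ℝ).flip x).hasFDerivAt.comp_hasDerivAt 0 hg0
  have : Tendsto (fun t => slope ψ 0 t) (nhdsWithin 0 {(0:ℝ)}ᶜ) (nhds ⟪H x, x⟫) :=
    hasDerivAt_iff_tendsto_slope.1 hψd
  refine ge_of_tendsto this ?_
  filter_upwards [self_mem_nhdsWithin] with t ht
  rcases lt_or_gt_of_ne (Set.mem_compl_singleton_iff.1 ht) with h | h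
  · have := hmono h.le
    simp only [slope_def_field]
    rw [div_nonneg_iff]
    right
    constructor
    · simpa using sub_nonpos.2 this
    · simpa using h.le
  · have := hmono h.le
    simp only [slope_def_field]
    apply div_nonneg
    · simpa using sub_nonneg.2 this
    · simpa using h.le

lemma psd_cs (H : E →L[ℝ] E) (hsymm : ∀ u v : E, ⟪H u, v⟫ = ⟪H v, u⟫)
    (hpsd : ∀ x : E, 0 ≤ ⟪H x, x⟫) (u v : E) :
    ⟪H u, v⟫ ^ 2 ≤ ⟪H u, u⟫ * ⟪H v, v⟫ := by
  have key : ∀ t : ℝ, 0 ≤ ⟪H v, v⟫ * (t * t) + (2 * ⟪H u, v⟫) * t + ⟪H u, u⟫ := by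
    intro t
    have h0 := hpsd (u + t • v)
    have hexp : ⟪H (u + t • v), u + t • v⟫
        = ⟪H v, v⟫ * (t * t) + (2 * ⟪H u, v⟫) * t + ⟪H u, u⟫ := by
      have h2 : ⟪H v, u⟫ = ⟪H u, v⟫ := (hsymm v u)
      simp only [map_add, map_smul, inner_add_left, inner_add_right,
        real_inner_smul_left, real_inner_smul_right, ContinuousLinearMap.coe_smul',
        Pi.smul_apply, smul_eq_mul, h2]
      ring
    linarith [hexp ▸ h0]
  have hd := discrim_le_zero key
  rw [discrim] at hd
  nlinarith [hd]
end aux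

/-- for a convex C² function with invertible Hessian `H` and nonzero gradient `g`
at `w`, the directional derivative of `u ↦ ‖∇L(u)‖²` at `w` along the component `v_⊥` of the
Newton direction orthogonal to the gradient, namely `⟪v_⊥, 2 H g⟫`, is nonnegative. -/
theorem stmt6 {n : ℕ} (L : EuclideanSpace ℝ (Fin n) → ℝ)
    (hconv : ConvexOn ℝ Set.univ L) (hC2 : ContDiff ℝ 2 L)
    (w : EuclideanSpace ℝ (Fin n))
    (H : EuclideanSpace ℝ (Fin n) ≃L[ℝ] EuclideanSpace ℝ (Fin n))
    (hH : HasFDerivAt (gradient L)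
      (H : EuclideanSpace ℝ (Fin n) →L[ℝ] EuclideanSpace ℝ (Fin n)) w)
    (g : EuclideanSpace ℝ (Fin n)) (hgdef : g = gradient L w) (hg : g ≠ 0)
    (v₁ v₂ vpar vperp : EuclideanSpace ℝ (Fin n))
    (hv₁ : v₁ = -g) (hv₂ : v₂ = -(H.symm g))
    (hvpar : vpar = (⟪v₂, v₁⟫ / ‖v₁‖ ^ 2) • v₁)
    (hvperp : vperp = v₂ - vpar) :
    0 ≤ ⟪vperp, (2 : ℝ) • H g⟫ := by
  set Hc : EuclideanSpace ℝ (Fin n) →L[ℝ] EuclideanSpace ℝ (Fin n) :=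
    (H : EuclideanSpace ℝ (Fin n) →L[ℝ] EuclideanSpace ℝ (Fin n)) with hHc
  have hsymm := hessian_symm L hC2 w Hc hH
  have hpsd := hessian_psd L hconv hC2 w Hc hH
  set p : EuclideanSpace ℝ (Fin n) := H.symm g with hp
  have hHp : Hc p = g := H.apply_symm_apply g
  have hgn : (0:ℝ) < ‖g‖ := norm_pos_iff.2 hg
  have hn : (0:ℝ) < ‖g‖ ^ 2 := by positivity
  have hpHg : ⟪p, Hc g⟫ = ‖g‖ ^ 2 := by
    rw [real_inner_comm, hsymm g p, hHp, real_inner_self_eq_norm_sq]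
  have hcs : ‖g‖ ^ 2 * ‖g‖ ^ 2 ≤ ⟪g, p⟫ * ⟪Hc g, g⟫ := by
    have := psd_cs Hc hsymm hpsd p g
    rw [hHp, real_inner_self_eq_norm_sq] at this
    calc ‖g‖ ^ 2 * ‖g‖ ^ 2 = (‖g‖ ^ 2) ^ 2 := by ring
    _ ≤ ⟪g, p⟫ * ⟪Hc g, g⟫ := this
  have hval : ⟪vperp, (2:ℝ) • H g⟫
      = 2 * (-⟪p, Hc g⟫ + (⟪p, g⟫ / ‖g‖ ^ 2) * ⟪g, Hc g⟫) := by
    rw [hvperp, hvpar, hv₂, hv₁]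
    rw [show (H g : EuclideanSpace ℝ (Fin n)) = Hc g from rfl]
    simp only [inner_sub_left, real_inner_smul_left, real_inner_smul_right,
      inner_neg_left, inner_neg_right, inner_neg_neg, norm_neg]
    field_simp
    ring
  rw [hval, hpHg]
  have h1 : ⟪p, g⟫ = ⟪g, p⟫ := real_inner_comm g p
  have h2 : ⟪g, Hc g⟫ = ⟪Hc g, g⟫ := real_inner_comm (Hc g) g
  rw [h1, h2]
  have hkey : ‖g‖ ^ 2 ≤ ⟪g, p⟫ / ‖g‖ ^ 2 * ⟪Hc g, g⟫ := by
    rw [div_mul_eq_mul_div, le_div_iff₀ hn]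
    linarith [hcs]
  linarith
end

section
/- Let L : ℝⁿ → ℝ be strictly convex and twice continuously differentiable with positive definite Hessian everywhere, let w₀ ∈ ℝⁿ, and let w' be a maximizer of ‖∇L(w)‖² over the level set {w ∈ ℝⁿ : L(w) = L(w₀)}. If ∇L(w') ≠ 0, then ∇L(w') is an eigenvector of the Hessian ∇²L(w'): there exists λ₀ ∈ ℝ with ∇²L(w') ∇L(w') = λ₀ ∇L(w'), and moreover 0 < λ₀ ≤ λ_max(∇²L(w')), where λ_max denotes the largest eigenvalue. -/
open scoped RealInnerProductSpace

/-- The largest eigenvalue of a (self-adjoint) operator on Euclidean space, via the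
variational (Rayleigh-quotient) characterization. -/
noncomputable def lamMax {n : ℕ}
    (T : EuclideanSpace ℝ (Fin n) →L[ℝ] EuclideanSpace ℝ (Fin n)) : ℝ :=
  ⨆ v : Metric.sphere (0 : EuclideanSpace ℝ (Fin n)) 1,
    ⟪T (v : EuclideanSpace ℝ (Fin n)), (v : EuclideanSpace ℝ (Fin n))⟫

/-- at a maximizer `w'` of the squared gradient norm over a level set of a
strictly convex C² function with positive definite Hessian, the gradient is an eigenvector
of the Hessian with eigenvalue `λ₀ ∈ (0, λ_max(∇²L(w'))]`. -/
theorem stmt9 {n : ℕ} (L : EuclideanSpace ℝ (Fin n) → ℝ)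
    (hsc : StrictConvexOn ℝ Set.univ L) (hC2 : ContDiff ℝ 2 L)
    (hdiff : ∀ x, DifferentiableAt ℝ (gradient L) x)
    (hpos : ∀ x v, v ≠ 0 → 0 < ⟪fderiv ℝ (gradient L) x v, v⟫)
    (w₀ w' : EuclideanSpace ℝ (Fin n))
    (hlevel : L w' = L w₀)
    (hmax : ∀ v, L v = L w₀ → ‖gradient L v‖ ^ 2 ≤ ‖gradient L w'‖ ^ 2)
    (hg : gradient L w' ≠ 0) :
    ∃ lam₀ : ℝ, fderiv ℝ (gradient L) w' (gradient L w') = lam₀ • gradient L w' ∧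
      0 < lam₀ ∧ lam₀ ≤ lamMax (fderiv ℝ (gradient L) w') := by
  classical
  set g := gradient L with hgdef
  set H := fderiv ℝ (gradient L) w' with hHdef
  -- the inverse dual map as a genuinely ℝ-linear continuous map
  let e' : (EuclideanSpace ℝ (Fin n) →L[ℝ] ℝ) →L[ℝ] EuclideanSpace ℝ (Fin n) :=
    ⟨{ toFun := fun ℓ => (InnerProductSpace.toDual ℝ _).symm ℓ,
       map_add' := fun ℓ₁ ℓ₂ => by simp,
       map_smul' := fun c ℓ => by simp },
     (InnerProductSpace.toDual ℝ _).symm.continuous⟩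
  -- g is C¹
  have hgC1 : ContDiff ℝ 1 g := by
    have h1 : ContDiff ℝ 1 (fderiv ℝ L) := hC2.fderiv_right (by norm_num)
    have heqg : g = fun x => e' (fderiv ℝ L x) := rfl
    rw [heqg]
    exact e'.contDiff.comp h1
  have hLd : ∀ x, DifferentiableAt ℝ (fderiv ℝ L) x := fun x =>
    ((hC2.fderiv_right (m := 1) (by norm_num)).differentiable (by norm_num)) x
  -- fderiv L w' x = ⟪g w', x⟫
  have hfd : ∀ x, fderiv ℝ L w' x = ⟪g w', x⟫ := fun x =>
    (InnerProductSpace.toDual_symm_apply).symm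
  -- relation between H and the second fderiv, and symmetry of H
  have hkey : ∀ v u, ⟪u, H v⟫ = fderiv ℝ (fderiv ℝ L) w' v u := by
    intro v u
    have hA : HasFDerivAt (fun x => ⟪u, g x⟫) ((innerSL ℝ u).comp H) w' :=
      ((innerSL ℝ u).hasFDerivAt).comp w' (hdiff w').hasFDerivAt
    have hfun : (fun x => ⟪u, g x⟫) = fun x => fderiv ℝ L x u := by
      funext x
      rw [real_inner_comm]
      exact InnerProductSpace.toDual_symm_apply
    rw [hfun] at hA
    have hB : HasFDerivAt (fun x => fderiv ℝ L x u)
        ((ContinuousLinearMap.apply ℝ ℝ u).comp (fderiv ℝ (fderiv ℝ L) w')) w' :=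
      ((ContinuousLinearMap.apply ℝ ℝ u).hasFDerivAt).comp w' (hLd w').hasFDerivAt
    have hAB := hA.unique hB
    exact DFunLike.congr_fun hAB v
  have hsnd : IsSymmSndFDerivAt ℝ L w' :=
    (hC2.contDiffAt (x := w')).isSymmSndFDerivAt (by simp [minSmoothness_of_isRCLikeNormedField])
  have hsymm : ∀ v u : EuclideanSpace ℝ (Fin n), ⟪H v, u⟫ = ⟪H u, v⟫ := by
    intro v u
    calc ⟪H v, u⟫ = ⟪u, H v⟫ := real_inner_comm _ _
      _ = fderiv ℝ (fderiv ℝ L) w' v u := hkey v u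
      _ = fderiv ℝ (fderiv ℝ L) w' u v := hsnd.eq v u
      _ = ⟪v, H u⟫ := (hkey u v).symm
      _ = ⟪H u, v⟫ := real_inner_comm _ _
  -- strict derivatives
  have hL' : HasStrictFDerivAt L (fderiv ℝ L w') w' :=
    (hC2.contDiffAt (x := w')).hasStrictFDerivAt (by norm_num)
  have hg' : HasStrictFDerivAt g H w' :=
    (hgC1.contDiffAt (x := w')).hasStrictFDerivAt one_ne_zero
  -- objective function
  set φ : EuclideanSpace ℝ (Fin n) → ℝ := fun w => ⟪g w, g w⟫ with hφdef
  have hφ' : HasStrictFDerivAt φ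
      ((fderivInnerCLM ℝ (g w', g w')).comp (H.prod H)) w' :=
    hg'.inner ℝ hg'
  -- local extremum
  have hextr : IsLocalExtrOn φ {x | L x = L w'} w' := by
    refine Or.inr (IsMaxOn.localize ?_)
    intro x hx
    have hx' : L x = L w₀ := by rw [Set.mem_setOf_eq] at hx; rw [hx, hlevel]
    have h := hmax x hx'
    show φ x ≤ φ w'
    simp only [φ, real_inner_self_eq_norm_sq]
    exact h
  obtain ⟨a, b, hab, heq⟩ :=
    hextr.exists_multipliers_of_hasStrictFDerivAt_1d hL' hφ'
  -- pointwise form of the multiplier identity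
  have key : ∀ x, ⟪a • g w' + (2 * b) • H (g w'), x⟫ = 0 := by
    intro x
    have h0 := DFunLike.congr_fun heq x
    simp only [ContinuousLinearMap.add_apply, ContinuousLinearMap.smul_apply,
      ContinuousLinearMap.zero_apply, ContinuousLinearMap.coe_comp',
      Function.comp_apply, ContinuousLinearMap.prod_apply, fderivInnerCLM_apply,
      smul_eq_mul] at h0
    rw [hfd x] at h0
    have hsx : ⟪g w', H x⟫ = ⟪H (g w'), x⟫ :=
      (real_inner_comm _ _).trans (hsymm x (g w'))
    have hsx' : ⟪H x, g w'⟫ = ⟪H (g w'), x⟫ := hsymm x (g w')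
    rw [hsx, hsx'] at h0
    rw [inner_add_left, real_inner_smul_left, real_inner_smul_left]
    ring_nf
    ring_nf at h0
    linarith
  have hzero : a • g w' + (2 * b) • H (g w') = 0 :=
    inner_self_eq_zero.mp (key _)
  -- b ≠ 0
  have hb : b ≠ 0 := by
    intro hb0
    rw [hb0] at hzero
    simp only [mul_zero, zero_smul, add_zero] at hzero
    have ha : a = 0 := by
      rcases smul_eq_zero.mp hzero with h | h
      · exact h
      · exact absurd h hg
    exact hab (by simp [ha, hb0, Prod.ext_iff])
  have h2b : (2 * b) ≠ 0 := mul_ne_zero two_ne_zero hb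
  obtain ⟨lam₀, hlam⟩ : ∃ l : ℝ, l = -a / (2 * b) := ⟨_, rfl⟩
  -- eigenvector equation
  have h1 : (2 * b) • H (g w') = (-a) • g w' := by
    rw [neg_smul]
    exact eq_neg_of_add_eq_zero_right hzero
  have heig : H (g w') = lam₀ • g w' := by
    have h2 : H (g w') = (2 * b)⁻¹ • ((2 * b) • H (g w')) := by
      rw [smul_smul, inv_mul_cancel₀ h2b, one_smul]
    rw [h2, h1, smul_smul, hlam, div_eq_inv_mul]
  -- positivity
  have hHg : 0 < ⟪H (g w'), g w'⟫ := hpos w' (g w') hg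
  have hgn : ‖g w'‖ ≠ 0 := norm_ne_zero_iff.mpr hg
  have hgg : 0 < ⟪g w', g w'⟫ := by
    rw [real_inner_self_eq_norm_sq]
    exact pow_pos (norm_pos_iff.mpr hg) 2
  have hlampos : 0 < lam₀ := by
    rw [heig, real_inner_smul_left] at hHg
    rcases mul_pos_iff.mp hHg with ⟨h, _⟩ | ⟨_, h2⟩
    · exact h
    · linarith
  -- upper bound
  set u : EuclideanSpace ℝ (Fin n) := ‖g w'‖⁻¹ • g w' with hudef
  have hu1 : ‖u‖ = 1 := by
    rw [hudef, norm_smul, norm_inv, norm_norm, inv_mul_cancel₀ hgn]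
  have humem : u ∈ Metric.sphere (0 : EuclideanSpace ℝ (Fin n)) 1 := by
    simpa [mem_sphere_zero_iff_norm] using hu1
  have hval : ⟪H u, u⟫ = lam₀ := by
    rw [hudef, map_smul, heig, smul_smul, real_inner_smul_left,
      real_inner_smul_right, real_inner_self_eq_norm_sq]
    field_simp
  have hbdd : BddAbove (Set.range fun v : Metric.sphere
      (0 : EuclideanSpace ℝ (Fin n)) 1 =>
      ⟪H (v : EuclideanSpace ℝ (Fin n)), (v : EuclideanSpace ℝ (Fin n))⟫) := by
    refine ⟨‖H‖, ?_⟩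
    rintro y ⟨⟨v, hv⟩, rfl⟩
    have hv1 : ‖v‖ = 1 := mem_sphere_zero_iff_norm.mp hv
    calc ⟪H v, v⟫ ≤ ‖H v‖ * ‖v‖ := real_inner_le_norm _ _
      _ ≤ ‖H‖ * ‖v‖ * ‖v‖ := by
          gcongr
          exact H.le_opNorm v
      _ = ‖H‖ := by rw [hv1]; ring
  have hle : lam₀ ≤ lamMax H := by
    have h := le_ciSup hbdd (⟨u, humem⟩ : Metric.sphere
      (0 : EuclideanSpace ℝ (Fin n)) 1)
    rw [hval] at h
    exact h
  exact ⟨lam₀, heig, hlampos, hle⟩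
end

section
/- Let L : ℝⁿ → ℝ be three times continuously differentiable, and let w ∈ ℝⁿ be a point at which the gradient is an eigenvector of the Hessian: ∇²L(w) ∇L(w) = λ ∇L(w) for some λ ∈ ℝ. Let M ∈ ℝ^{n×n} be antisymmetric (Mᵀ = −M), define the vector field a(x) = M ∇L(x) and the reverse gradient field r(x) = −∇L(x), with vector fields acting on functions as (Xh)(x) = ∑_i xⁱ(x) ∂h/∂xⁱ(x) and [A,R] denoting the commutator. Then (R([A,R]L))(w) = 2 ∑_{i,j,k,α} M_{jα} (∂L/∂w_k)(w) (∂L/∂w_α)(w) (∂³L/∂w_k ∂w_i ∂w_j)(w) (∂L/∂w_i)(w). -/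
open Matrix

/-- The `i`-th partial derivative `∂h/∂wⁱ` of a function on Euclidean space. -/
noncomputable def pd {n : ℕ} (i : Fin n) (h : EuclideanSpace ℝ (Fin n) → ℝ)
    (w : EuclideanSpace ℝ (Fin n)) : ℝ :=
  fderiv ℝ h w (EuclideanSpace.single i 1)

/-- The action `(Xh)(w) = ∑ i, xⁱ(w) ∂h/∂wⁱ(w)` of a vector field (given by its component
functions `x`) on a function `h`, as a first-order differential operator. -/
noncomputable def vact {n : ℕ} (x : EuclideanSpace ℝ (Fin n) → Fin n → ℝ)
    (h : EuclideanSpace ℝ (Fin n) → ℝ) (w : EuclideanSpace ℝ (Fin n)) : ℝ :=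
  ∑ i, x w i * pd i h w

variable {n : ℕ}


lemma pd_sum {ι : Type*} (s : Finset ι) (f : ι → EuclideanSpace ℝ (Fin n) → ℝ)
    (i : Fin n) (w : EuclideanSpace ℝ (Fin n))
    (hf : ∀ j ∈ s, DifferentiableAt ℝ (f j) w) :
    pd i (fun x => ∑ j ∈ s, f j x) w = ∑ j ∈ s, pd i (f j) w := by
  unfold pd
  rw [fderiv_fun_sum hf]
  simp

lemma pd_mul (f g : EuclideanSpace ℝ (Fin n) → ℝ) (i : Fin n) (w : EuclideanSpace ℝ (Fin n))
    (hf : DifferentiableAt ℝ f w) (hg : DifferentiableAt ℝ g w) :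
    pd i (fun x => f x * g x) w = f w * pd i g w + pd i f w * g w := by
  unfold pd
  rw [fderiv_fun_mul hf hg]
  simp [mul_comm]

lemma pd_neg (f : EuclideanSpace ℝ (Fin n) → ℝ) (i : Fin n) (w : EuclideanSpace ℝ (Fin n)) :
    pd i (fun x => -f x) w = -pd i f w := by
  unfold pd
  rw [fderiv_fun_neg]
  simp

lemma pd_const_mul (f : EuclideanSpace ℝ (Fin n) → ℝ) (c : ℝ) (i : Fin n)
    (w : EuclideanSpace ℝ (Fin n)) (hf : DifferentiableAt ℝ f w) :
    pd i (fun x => c * f x) w = c * pd i f w := by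
  unfold pd
  rw [fderiv_const_mul hf]
  simp

lemma contDiff_pd {m : ℕ} (f : EuclideanSpace ℝ (Fin n) → ℝ) (hf : ContDiff ℝ (m + 1 : ℕ) f)
    (i : Fin n) : ContDiff ℝ m (pd i f) := by
  have h1 : ContDiff ℝ m (fderiv ℝ f) := hf.fderiv_right (by norm_cast)
  exact h1.clm_apply contDiff_const

lemma pd_swap_eval (f : EuclideanSpace ℝ (Fin n) → ℝ) (hf : ContDiff ℝ 2 f)
    (i j : Fin n) (w : EuclideanSpace ℝ (Fin n)) :
    pd i (pd j f) w = pd j (pd i f) w := by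
  have hdf : DifferentiableAt ℝ (fderiv ℝ f) w :=
    ((hf.fderiv_right (m := 1) (by norm_num)).differentiable (by norm_num)).differentiableAt
  have key : ∀ u v : EuclideanSpace ℝ (Fin n),
      fderiv ℝ (fun x => fderiv ℝ f x v) w u = fderiv ℝ (fderiv ℝ f) w u v := by
    intro u v
    rw [fderiv_clm_apply hdf (differentiableAt_const _)]
    simp
  unfold pd
  rw [key, key]
  exact hf.contDiffAt.isSymmSndFDerivAt (by norm_num) _ _

lemma antisym_sum_zero (M : Matrix (Fin n) (Fin n) ℝ) (hM : Mᵀ = -M) (u : Fin n → ℝ) :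
    ∑ j, ∑ α, M j α * u α * u j = 0 := by
  have hswap : ∑ j, ∑ α, M j α * u α * u j = ∑ j, ∑ α, M α j * u j * u α :=
    Finset.sum_comm
  have hzero : (∑ j, ∑ α, M j α * u α * u j) + (∑ j, ∑ α, M j α * u α * u j) = 0 := by
    nth_rewrite 2 [hswap]
    simp only [← Finset.sum_add_distrib]
    refine Finset.sum_eq_zero fun j _ => Finset.sum_eq_zero fun α _ => ?_
    have h1 : M α j = -M j α := by
      have := congrFun (congrFun hM j) α
      simpa using this
    rw [h1]; ring
  linarith

lemma sum_comm4 (f : Fin n → Fin n → Fin n → Fin n → ℝ) :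
    ∑ k, ∑ j, ∑ α, ∑ i, f k j α i = ∑ j, ∑ α, ∑ i, ∑ k, f k j α i := by
  rw [Finset.sum_comm]
  refine Finset.sum_congr rfl fun j _ => ?_
  rw [Finset.sum_comm]
  refine Finset.sum_congr rfl fun α _ => ?_
  rw [Finset.sum_comm]


/-- at a point `w` where the gradient is an eigenvector of the Hessian,
for the vector field `A` with components `a = M∇L` (`M` antisymmetric) and the reverse
gradient field `R`, one has
`(R([A,R]L))(w) = 2 ∑_{i,j,k,α} M_{jα} ∂_k L ∂_α L ∂³_{k i j} L ∂_i L`. -/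
theorem stmt12 {n : ℕ} (L : EuclideanSpace ℝ (Fin n) → ℝ) (hL : ContDiff ℝ 3 L)
    (w : EuclideanSpace ℝ (Fin n)) (lam : ℝ)
    -- ∇²L(w) ∇L(w) = λ ∇L(w), in coordinates
    (heig : ∀ i, ∑ j, pd i (pd j L) w * pd j L w = lam * pd i L w)
    (M : Matrix (Fin n) (Fin n) ℝ) (hM : Mᵀ = -M)
    (a : EuclideanSpace ℝ (Fin n) → Fin n → ℝ)
    (ha : ∀ x j, a x j = ∑ α, M j α * pd α L x)
    (r : EuclideanSpace ℝ (Fin n) → Fin n → ℝ)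
    (hr : ∀ x i, r x i = -(pd i L x)) :
    vact r (fun x => vact a (vact r L) x - vact r (vact a L) x) w =
      2 * ∑ i, ∑ j, ∑ k, ∑ α,
        M j α * pd k L w * pd α L w * pd k (pd i (pd j L)) w * pd i L w := by
  -- regularity facts
  have hL2 : ContDiff ℝ 2 L := hL.of_le (by norm_num)
  have hg2 : ∀ i, ContDiff ℝ 2 (pd i L) := fun i =>
    contDiff_pd (m := 2) L (by exact_mod_cast hL) i
  have hgd : ∀ (i) (x : EuclideanSpace ℝ (Fin n)), DifferentiableAt ℝ (pd i L) x := fun i x =>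
    ((hg2 i).differentiable (by norm_num)).differentiableAt
  have hh1 : ∀ j i, ContDiff ℝ 1 (pd j (pd i L)) := fun j i =>
    contDiff_pd (m := 1) (pd i L) (by exact_mod_cast hg2 i) j
  have hhd : ∀ (j i) (x : EuclideanSpace ℝ (Fin n)), DifferentiableAt ℝ (pd j (pd i L)) x :=
    fun j i x => ((hh1 j i).differentiable (by norm_num)).differentiableAt
  have hsymf : ∀ i j, pd i (pd j L) = pd j (pd i L) := fun i j =>
    funext fun x => pd_swap_eval L hL2 i j x
  have heig' : ∀ i, ∑ k, pd k (pd i L) w * pd k L w = lam * pd i L w := by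
    intro i
    calc ∑ k, pd k (pd i L) w * pd k L w = ∑ k, pd i (pd k L) w * pd k L w :=
          Finset.sum_congr rfl fun k _ => by rw [hsymf k i]
      _ = lam * pd i L w := heig i
  -- Step A : A L = 0 pointwise (antisymmetry)
  have hAL : ∀ x, vact a L x = 0 := by
    intro x
    show ∑ j, a x j * pd j L x = 0
    have h1 : ∀ j ∈ Finset.univ, a x j * pd j L x = ∑ α, M j α * pd α L x * pd j L x := by
      intro j _
      rw [ha, Finset.sum_mul]
    rw [Finset.sum_congr rfl h1]
    exact antisym_sum_zero M hM (fun i => pd i L x)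
  -- Step B : R (A L) = 0 pointwise
  have hRAL : ∀ x, vact r (vact a L) x = 0 := by
    intro x
    show ∑ i, r x i * pd i (vact a L) x = 0
    have h0 : vact a L = fun _ => (0:ℝ) := funext hAL
    rw [h0]
    simp [pd]
  -- Step C : simplify the commutator function
  have hfun : (fun x => vact a (vact r L) x - vact r (vact a L) x)
      = vact a (vact r L) := funext fun x => by rw [hRAL x, sub_zero]
  rw [hfun]
  -- Step D : R L explicit
  have hRL : vact r L = fun y => ∑ i, -(pd i L y * pd i L y) := by
    funext y
    show ∑ i, r y i * pd i L y = _
    refine Finset.sum_congr rfl fun i _ => ?_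
    rw [hr]; ring
  -- Step E : pd j (R L)
  have pdRL : ∀ (j) (x : EuclideanSpace ℝ (Fin n)),
      pd j (vact r L) x = ∑ i, (-2) * (pd i L x * pd j (pd i L) x) := by
    intro j x
    rw [hRL]
    rw [pd_sum Finset.univ (fun i y => -(pd i L y * pd i L y)) j x
      (fun i _ => ((hgd i x).mul (hgd i x)).neg)]
    refine Finset.sum_congr rfl fun i _ => ?_
    rw [pd_neg (fun y => pd i L y * pd i L y) j x,
      pd_mul (pd i L) (pd i L) j x (hgd i x) (hgd i x)]
    ring
  -- Step F : A (R L) explicit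
  have hG : vact a (vact r L) = fun x => ∑ j, ∑ α, ∑ i,
      (-2 * M j α) * (pd α L x * (pd i L x * pd j (pd i L) x)) := by
    funext x
    show ∑ j, a x j * pd j (vact r L) x = _
    refine Finset.sum_congr rfl fun j _ => ?_
    rw [ha, pdRL j x, Finset.sum_mul]
    refine Finset.sum_congr rfl fun α _ => ?_
    rw [Finset.mul_sum]
    refine Finset.sum_congr rfl fun i _ => ?_
    ring
  -- Step G : pd k of A(R L) at w
  have hdin : ∀ (j α i) (x : EuclideanSpace ℝ (Fin n)),
      DifferentiableAt ℝ (fun y => (-2 * M j α) *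
        (pd α L y * (pd i L y * pd j (pd i L) y))) x := fun j α i x =>
    (((hgd α x).mul ((hgd i x).mul (hhd j i x)))).const_mul _
  have hmain : ∀ k, pd k (vact a (vact r L)) w = ∑ j, ∑ α, ∑ i,
      (-2 * M j α) * (pd α L w * (pd i L w * pd k (pd j (pd i L)) w
        + pd k (pd i L) w * pd j (pd i L) w)
        + pd k (pd α L) w * (pd i L w * pd j (pd i L) w)) := by
    intro k
    rw [hG]
    rw [pd_sum Finset.univ (fun j x => ∑ α, ∑ i,
        (-2 * M j α) * (pd α L x * (pd i L x * pd j (pd i L) x))) k w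
      (fun j _ => DifferentiableAt.fun_sum fun α _ => DifferentiableAt.fun_sum fun i _ => hdin j α i w)]
    refine Finset.sum_congr rfl fun j _ => ?_
    rw [pd_sum Finset.univ (fun α x => ∑ i,
        (-2 * M j α) * (pd α L x * (pd i L x * pd j (pd i L) x))) k w
      (fun α _ => DifferentiableAt.fun_sum fun i _ => hdin j α i w)]
    refine Finset.sum_congr rfl fun α _ => ?_
    rw [pd_sum Finset.univ (fun i x =>
        (-2 * M j α) * (pd α L x * (pd i L x * pd j (pd i L) x))) k w
      (fun i _ => hdin j α i w)]
    refine Finset.sum_congr rfl fun i _ => ?_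
    rw [pd_const_mul (fun x => pd α L x * (pd i L x * pd j (pd i L) x)) (-2 * M j α) k w
      ((hgd α w).mul ((hgd i w).mul (hhd j i w)))]
    rw [pd_mul (pd α L) (fun x => pd i L x * pd j (pd i L) x) k w (hgd α w)
      ((hgd i w).mul (hhd j i w))]
    rw [pd_mul (pd i L) (pd j (pd i L)) k w (hgd i w) (hhd j i w)]
  -- the three pieces
  have hSB : (∑ k, ∑ j, ∑ α, ∑ i,
      2 * M j α * pd k L w * pd α L w * pd k (pd i L) w * pd j (pd i L) w) = 0 := by
    calc ∑ k, ∑ j, ∑ α, ∑ i,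
          2 * M j α * pd k L w * pd α L w * pd k (pd i L) w * pd j (pd i L) w
        = ∑ j, ∑ α, ∑ i, ∑ k,
          2 * M j α * pd k L w * pd α L w * pd k (pd i L) w * pd j (pd i L) w := sum_comm4 _
      _ = ∑ j, ∑ α, ∑ i, (2 * M j α * pd α L w * pd j (pd i L) w) * (lam * pd i L w) := by
          refine Finset.sum_congr rfl fun j _ => Finset.sum_congr rfl fun α _ =>
            Finset.sum_congr rfl fun i _ => ?_
          calc ∑ k, 2 * M j α * pd k L w * pd α L w * pd k (pd i L) w * pd j (pd i L) w
              = (2 * M j α * pd α L w * pd j (pd i L) w) * ∑ k, pd k (pd i L) w * pd k L w := by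
                rw [Finset.mul_sum]; exact Finset.sum_congr rfl fun k _ => by ring
            _ = (2 * M j α * pd α L w * pd j (pd i L) w) * (lam * pd i L w) := by rw [heig' i]
      _ = ∑ j, ∑ α, (2 * lam * lam) * (M j α * pd α L w * pd j L w) := by
          refine Finset.sum_congr rfl fun j _ => Finset.sum_congr rfl fun α _ => ?_
          calc ∑ i, (2 * M j α * pd α L w * pd j (pd i L) w) * (lam * pd i L w)
              = (2 * lam * M j α * pd α L w) * ∑ i, pd j (pd i L) w * pd i L w := by
                rw [Finset.mul_sum]; exact Finset.sum_congr rfl fun i _ => by ring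
            _ = (2 * lam * M j α * pd α L w) * (lam * pd j L w) := by rw [heig j]
            _ = (2 * lam * lam) * (M j α * pd α L w * pd j L w) := by ring
      _ = 0 := by
          simp only [← Finset.mul_sum]
          have := antisym_sum_zero M hM (fun i => pd i L w)
          rw [this, mul_zero]
  have hSC : (∑ k, ∑ j, ∑ α, ∑ i,
      2 * M j α * pd k L w * pd k (pd α L) w * pd i L w * pd j (pd i L) w) = 0 := by
    calc ∑ k, ∑ j, ∑ α, ∑ i,
          2 * M j α * pd k L w * pd k (pd α L) w * pd i L w * pd j (pd i L) w
        = ∑ j, ∑ α, ∑ i, ∑ k,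
          2 * M j α * pd k L w * pd k (pd α L) w * pd i L w * pd j (pd i L) w := sum_comm4 _
      _ = ∑ j, ∑ α, ∑ i, (2 * M j α * pd i L w * pd j (pd i L) w) * (lam * pd α L w) := by
          refine Finset.sum_congr rfl fun j _ => Finset.sum_congr rfl fun α _ =>
            Finset.sum_congr rfl fun i _ => ?_
          calc ∑ k, 2 * M j α * pd k L w * pd k (pd α L) w * pd i L w * pd j (pd i L) w
              = (2 * M j α * pd i L w * pd j (pd i L) w) * ∑ k, pd k (pd α L) w * pd k L w := by
                rw [Finset.mul_sum]; exact Finset.sum_congr rfl fun k _ => by ring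
            _ = (2 * M j α * pd i L w * pd j (pd i L) w) * (lam * pd α L w) := by rw [heig' α]
      _ = ∑ j, ∑ α, (2 * lam * lam) * (M j α * pd α L w * pd j L w) := by
          refine Finset.sum_congr rfl fun j _ => Finset.sum_congr rfl fun α _ => ?_
          calc ∑ i, (2 * M j α * pd i L w * pd j (pd i L) w) * (lam * pd α L w)
              = (2 * lam * M j α * pd α L w) * ∑ i, pd j (pd i L) w * pd i L w := by
                rw [Finset.mul_sum]; exact Finset.sum_congr rfl fun i _ => by ring
            _ = (2 * lam * M j α * pd α L w) * (lam * pd j L w) := by rw [heig j]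
            _ = (2 * lam * lam) * (M j α * pd α L w * pd j L w) := by ring
      _ = 0 := by
          simp only [← Finset.mul_sum]
          have := antisym_sum_zero M hM (fun i => pd i L w)
          rw [this, mul_zero]
  have hSA : (∑ k, ∑ j, ∑ α, ∑ i,
      2 * M j α * pd k L w * pd α L w * pd i L w * pd k (pd j (pd i L)) w)
      = 2 * ∑ i, ∑ j, ∑ k, ∑ α,
        M j α * pd k L w * pd α L w * pd k (pd i (pd j L)) w * pd i L w := by
    rw [sum_comm4, sum_comm4, sum_comm4]
    rw [Finset.mul_sum]
    refine Finset.sum_congr rfl fun i _ => ?_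
    calc ∑ k, ∑ j, ∑ α, 2 * M j α * pd k L w * pd α L w * pd i L w * pd k (pd j (pd i L)) w
        = ∑ j, ∑ k, ∑ α, 2 * M j α * pd k L w * pd α L w * pd i L w * pd k (pd j (pd i L)) w :=
          Finset.sum_comm
      _ = 2 * ∑ j, ∑ k, ∑ α,
          M j α * pd k L w * pd α L w * pd k (pd i (pd j L)) w * pd i L w := by
          rw [Finset.mul_sum]
          refine Finset.sum_congr rfl fun j _ => ?_
          rw [Finset.mul_sum]
          refine Finset.sum_congr rfl fun k _ => ?_
          rw [Finset.mul_sum]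
          refine Finset.sum_congr rfl fun α _ => ?_
          rw [hsymf i j]
          ring
  -- final assembly
  show ∑ k, r w k * pd k (vact a (vact r L)) w = _
  calc ∑ k, r w k * pd k (vact a (vact r L)) w
      = ∑ k, ∑ j, ∑ α, ∑ i,
        (2 * M j α * pd k L w * pd α L w * pd i L w * pd k (pd j (pd i L)) w
        + 2 * M j α * pd k L w * pd α L w * pd k (pd i L) w * pd j (pd i L) w
        + 2 * M j α * pd k L w * pd k (pd α L) w * pd i L w * pd j (pd i L) w) := by
        refine Finset.sum_congr rfl fun k _ => ?_
        rw [hr, hmain k, Finset.mul_sum]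
        refine Finset.sum_congr rfl fun j _ => ?_
        rw [Finset.mul_sum]
        refine Finset.sum_congr rfl fun α _ => ?_
        rw [Finset.mul_sum]
        refine Finset.sum_congr rfl fun i _ => ?_
        ring
    _ = (∑ k, ∑ j, ∑ α, ∑ i,
          2 * M j α * pd k L w * pd α L w * pd i L w * pd k (pd j (pd i L)) w)
        + (∑ k, ∑ j, ∑ α, ∑ i,
          2 * M j α * pd k L w * pd α L w * pd k (pd i L) w * pd j (pd i L) w)
        + (∑ k, ∑ j, ∑ α, ∑ i,
          2 * M j α * pd k L w * pd k (pd α L) w * pd i L w * pd j (pd i L) w) := by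
        simp only [Finset.sum_add_distrib]
    _ = 2 * ∑ i, ∑ j, ∑ k, ∑ α,
        M j α * pd k L w * pd α L w * pd k (pd i (pd j L)) w * pd i L w := by
        rw [hSB, hSC, hSA, add_zero, add_zero]
end

section
/- Let n be a positive integer, let g : Fin n → ℝ, and let T : Fin n → Fin n → Fin n → ℝ be an indexed family of reals satisfying T(k, i, j) · g(α) = T(k, i, α) · g(j) for all indices i, k, j, α. Then for every antisymmetric matrix M ∈ ℝ^{n×n} (Mᵀ = −M), the fourfold contraction vanishes: ∑_{i,k,j,α} M_{jα} · g(k) · g(α) · T(k, i, j) · g(i) = 0. -/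
open Matrix

/-- if `T(k,i,j) g(α) = T(k,i,α) g(j)` for all indices, then the fourfold
contraction `∑ M_{jα} g(k) g(α) T(k,i,j) g(i)` vanishes for every antisymmetric matrix `M`. -/
theorem stmt15 {n : ℕ} (hn : 0 < n) (g : Fin n → ℝ) (T : Fin n → Fin n → Fin n → ℝ)
    (hT : ∀ k i j α, T k i j * g α = T k i α * g j)
    (M : Matrix (Fin n) (Fin n) ℝ) (hM : Mᵀ = -M) :
    ∑ i, ∑ k, ∑ j, ∑ α, M j α * g k * g α * T k i j * g i = 0 := by
  have hM' : ∀ j α, M α j = -M j α := by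
    intro j α
    have := congrFun (congrFun hM j) α
    simpa [Matrix.transpose_apply] using this
  have step : ∑ i, ∑ k, ∑ j, ∑ α, M j α * g k * g α * T k i j * g i
      = ∑ i, ∑ k, ∑ j, ∑ α, M α j * g k * g α * T k i j * g i := by
    refine Finset.sum_congr rfl fun i _ => Finset.sum_congr rfl fun k _ => ?_
    rw [Finset.sum_comm]
    refine Finset.sum_congr rfl fun a _ => Finset.sum_congr rfl fun b _ => ?_
    linear_combination (M b a * g k * g i) * hT k i b a
  have neg : ∑ i, ∑ k, ∑ j, ∑ α, M j α * g k * g α * T k i j * g i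
      = -(∑ i, ∑ k, ∑ j, ∑ α, M j α * g k * g α * T k i j * g i) := by
    conv_lhs => rw [step]
    rw [← Finset.sum_neg_distrib]
    refine Finset.sum_congr rfl fun i _ => ?_
    rw [← Finset.sum_neg_distrib]
    refine Finset.sum_congr rfl fun k _ => ?_
    rw [← Finset.sum_neg_distrib]
    refine Finset.sum_congr rfl fun j _ => ?_
    rw [← Finset.sum_neg_distrib]
    refine Finset.sum_congr rfl fun α _ => ?_
    rw [hM' j α]
    ring
  linarith
end
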